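/- Let u : ℝ² → ℝ be locally semiconcave, and suppose that for Lebesgue-almost every p ∈ ℝ², u is differentiable at p with ∂u/∂x(p) > 0 and (∂u/∂x(p))² − (∂u/∂y(p))² = 1. Then u is a viscosity solution of the Lorentzian eikonal equation g(∇u,∇u) = −1 on the 2-dimensional Minkowski space-time ℝ². -/

import Mathlib

set_option maxHeartbeats 1000000

section ViscosityHelpers
open MeasureTheory

lemma clm_eval (f : ℝ×ℝ →L[ℝ] ℝ) (w : ℝ×ℝ) : f w = w.1 * f (1,0) + w.2 * f (0,1) := by
  have h : w = w.1 • ((1:ℝ),(0:ℝ)) + w.2 • ((0:ℝ),(1:ℝ)) := by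
    ext <;> simp
  conv_lhs => rw [h]
  rw [map_add, _root_.map_smul, _root_.map_smul, smul_eq_mul, smul_eq_mul]

lemma exists_good (P : ℝ×ℝ → Prop) (hae : ∀ᵐ p ∂(volume : Measure (ℝ×ℝ)), P p)
    (z : ℝ×ℝ) {ρ : ℝ} (hρ : 0 < ρ) : ∃ q, q ∈ Metric.ball z ρ ∧ P q := by
  by_contra h
  push_neg at h
  have hsub : Metric.ball z ρ ⊆ {p | ¬ P p} := fun q hq => h q hq
  have h1 : volume (Metric.ball z ρ) = 0 :=
    le_antisymm (le_trans (measure_mono hsub) (le_of_eq (ae_iff.mp hae))) zero_le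
  exact (Metric.measure_ball_pos volume z hρ).ne' h1

lemma rcs {N₁ N₂ w₁ w₂ : ℝ} (h : N₁^2 - N₂^2 = 1) (h1 : 0 < N₁) (hw : |w₂| ≤ w₁) :
    Real.sqrt (w₁^2 - w₂^2) ≤ N₁*w₁ + N₂*w₂ := by
  have hN : |N₂| ≤ N₁ := by nlinarith [sq_abs N₂, abs_nonneg N₂]
  have hw2 : (0:ℝ) ≤ w₁ := le_trans (abs_nonneg _) hw
  have hmul : |N₂| * |w₂| ≤ N₁ * w₁ := mul_le_mul hN hw (abs_nonneg _) h1.le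
  have hpos : 0 ≤ N₁*w₁ + N₂*w₂ := by
    have := neg_abs_le (N₂*w₂)
    have := abs_mul N₂ w₂
    linarith
  have hsq : w₁^2 - w₂^2 ≤ (N₁*w₁+N₂*w₂)^2 := by nlinarith [sq_nonneg (N₁*w₂ + N₂*w₁)]
  calc Real.sqrt (w₁^2-w₂^2) ≤ Real.sqrt ((N₁*w₁+N₂*w₂)^2) := Real.sqrt_le_sqrt hsq
    _ = N₁*w₁+N₂*w₂ := Real.sqrt_sq hpos

lemma sq_diff_le {x y c : ℝ} (h : |x - y| ≤ c) : x^2 - y^2 ≤ c*(|x| + |y|) := by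
  calc x^2 - y^2 = (x-y)*(x+y) := by ring
  _ ≤ |(x-y)*(x+y)| := le_abs_self _
  _ = |x - y| * |x + y| := abs_mul _ _
  _ ≤ c * (|x| + |y|) := mul_le_mul h (abs_add_le x y) (abs_nonneg _) (le_trans (abs_nonneg _) h)

lemma norm_pair_le {z : ℝ×ℝ} {c : ℝ} (h1 : |z.1| ≤ c) (h2 : |z.2| ≤ c) : ‖z‖ ≤ c := by
  rw [Prod.norm_def]
  exact max_le (by rwa [Real.norm_eq_abs]) (by rwa [Real.norm_eq_abs])

lemma abs_fst_le (z : ℝ×ℝ) : |z.1| ≤ ‖z‖ := by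
  rw [← Real.norm_eq_abs]; exact norm_fst_le z

lemma abs_snd_le (z : ℝ×ℝ) : |z.2| ≤ ‖z‖ := by
  rw [← Real.norm_eq_abs]; exact norm_snd_le z


lemma littleo {φ : ℝ×ℝ → ℝ} {p : ℝ×ℝ} {L : ℝ×ℝ →L[ℝ] ℝ} (h : HasFDerivAt φ L p) {ε : ℝ} (hε : 0 < ε) :
    ∃ δ > 0, ∀ x : ℝ×ℝ, ‖x - p‖ < δ → |φ x - φ p - L (x - p)| ≤ ε * ‖x - p‖ := by
  have h1 := h.isLittleO.def hε
  rw [Metric.eventually_nhds_iff] at h1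
  obtain ⟨δ, hδ, h2⟩ := h1
  refine ⟨δ, hδ, fun x hx => ?_⟩
  have := h2 (show dist x p < δ by rwa [dist_eq_norm])
  simpa [Real.norm_eq_abs] using this


lemma aux1 {β s ε δ ρ : ℝ} (hs2 : s^2 = 1 + β^2) (hβ0 : 0 ≤ β) (hβs : β ≤ s) (hs1 : 1 ≤ s)
    (hρ1 : 4*s*ρ ≤ δ*ε^2) (hρ0 : 0 ≤ ρ) (hδ0 : 0 < δ) (hε : 0 < ε) (hε1 : ε ≤ 1) :
    (δ*(1-ε))^2 ≤ (δ*s - ρ)^2 - (δ*β + ρ)^2 := by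
  have h1 : (δ*s - ρ)^2 - (δ*β + ρ)^2 = δ^2*(s^2 - β^2) - 2*δ*ρ*(s + β) := by ring
  have h2 : δ^2*(s^2 - β^2) = δ^2 := by rw [hs2]; ring
  have h3 : 2*δ*ρ*(s + β) ≤ 4*δ*ρ*s := by nlinarith [mul_nonneg (mul_nonneg hδ0.le hρ0) (sub_nonneg.mpr hβs)]
  have h4 : 4*δ*ρ*s ≤ δ^2*ε^2 := by nlinarith [mul_le_mul_of_nonneg_left hρ1 hδ0.le]
  nlinarith [mul_nonneg (mul_nonneg (sq_nonneg δ) hε.le) (show (0:ℝ) ≤ 2 - 2*ε by linarith)]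

lemma aux2 {a b s : ℝ} (h : 1 ≤ a*s - b*b) (hs2 : s^2 = 1+b^2) (hs0 : 0 < s) : s ≤ a := by
  nlinarith

lemma aux3 {a b s : ℝ} (hs1 : 1 ≤ s) (has : s ≤ a) (hs2 : s^2 = 1+b^2) : 1 ≤ a^2 - b^2 := by
  nlinarith


lemma supergrad {u : ℝ×ℝ → ℝ} {O : Set (ℝ×ℝ)} {C : ℝ} (hC : 0 ≤ C)
    (hsc : ∀ x ∈ O, ∀ y ∈ O, ∀ t ∈ Set.Icc (0:ℝ) 1,
      (1 - t) * u x + t * u y - C / 2 * t * (1 - t) * ((x.1 - y.1) ^ 2 + (x.2 - y.2) ^ 2) ≤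
        u ((1 - t) • x + t • y))
    {q : ℝ×ℝ} (hq : q ∈ O) (hd : DifferentiableAt ℝ u q) {x : ℝ×ℝ} (hx : x ∈ O) :
    u x ≤ u q + fderiv ℝ u q (x - q) + C/2 * ((x.1-q.1)^2 + (x.2-q.2)^2) := by
  set E : ℝ := (x.1-q.1)^2 + (x.2-q.2)^2 with hE
  have hE0 : 0 ≤ E := by positivity
  have hE0 : 0 ≤ E := by positivity
  clear_value E
  set D : ℝ := fderiv ℝ u q (x - q) with hD
  set g : ℝ → ℝ := fun s => u (q + s • (x - q)) with hg
  have hinner : HasDerivAt (fun s : ℝ => q + s • (x - q)) (x - q) 0 := by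
    have h1 : HasDerivAt (fun s : ℝ => s • (x - q)) ((1:ℝ) • (x - q)) 0 :=
      (hasDerivAt_id 0).smul_const (x - q)
    simpa using h1.const_add q
  have hgd : HasDerivAt g D 0 := by
    have h0 : (fun s : ℝ => q + s • (x - q)) 0 = q := by simp
    have hf : HasFDerivAt u (fderiv ℝ u q) ((fun s : ℝ => q + s • (x - q)) 0) := by
      rw [h0]; exact hd.hasFDerivAt
    exact hf.comp_hasDerivAt 0 hinner
  have htend : Filter.Tendsto (fun s => (g s - g 0) / s) (nhdsWithin 0 (Set.Ioi 0)) (nhds D) := by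
    have h1 := hasDerivAt_iff_tendsto_slope.mp hgd
    have hmono : nhdsWithin (0:ℝ) (Set.Ioi 0) ≤ nhdsWithin 0 {(0:ℝ)}ᶜ :=
      nhdsWithin_mono 0 (fun s hs => ne_of_gt hs)
    refine (h1.mono_left hmono).congr (fun s => ?_)
    simp [slope_def_field]
  have hineq : ∀ s ∈ Set.Ioc (0:ℝ) 1, u x - u q - C/2 * E ≤ (g s - g 0) / s := by
    intro s hs
    obtain ⟨hs0, hs1⟩ := hs
    have key := hsc x hx q hq (1 - s) ⟨by linarith, by linarith⟩
    have hpt : (1 - (1-s)) • x + (1-s) • q = q + s • (x - q) := by module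
    rw [hpt] at key
    have hg0 : g 0 = u q := by simp [hg]
    have hgs : g s = u (q + s • (x - q)) := rfl
    rw [← hE] at key
    rw [le_div_iff₀ hs0]
    simp only [hg0, hgs]
    nlinarith [key, mul_nonneg (mul_nonneg hC hE0) (mul_nonneg hs0.le hs0.le)]
  have hfinal : u x - u q - C/2 * E ≤ D := by
    refine ge_of_tendsto htend ?_
    filter_upwards [Ioc_mem_nhdsGT_of_mem (Set.left_mem_Ico.mpr one_pos)] with s hs
    exact hineq s hs
  linarith

end ViscosityHelpers

/-- `u` is a viscosity solution of the Lorentzian eikonal equation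
`g(∇u,∇u) = -1` on the open set `O` in 2-dimensional Minkowski space-time
(metric `-dx² + dy²`): for every upper test function `φ` at `p ∈ O`,
`(∂φ/∂x(p))² - (∂φ/∂y(p))² ≥ 1`, and for every lower test function `φ` at `p`,
`(∂φ/∂x(p))² - (∂φ/∂y(p))² ≤ 1`. -/
def IsViscositySolution (u : ℝ × ℝ → ℝ) (O : Set (ℝ × ℝ)) : Prop :=
  (∀ p ∈ O, ∀ φ : ℝ × ℝ → ℝ, ∀ U : Set (ℝ × ℝ),
      IsOpen U → p ∈ U → U ⊆ O → ContDiffOn ℝ 1 φ U → φ p = u p →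
      (∀ x ∈ U, u x ≤ φ x) →
      1 ≤ (fderiv ℝ φ p (1, 0)) ^ 2 - (fderiv ℝ φ p (0, 1)) ^ 2) ∧
  (∀ p ∈ O, ∀ φ : ℝ × ℝ → ℝ, ∀ U : Set (ℝ × ℝ),
      IsOpen U → p ∈ U → U ⊆ O → ContDiffOn ℝ 1 φ U → φ p = u p →
      (∀ x ∈ U, φ x ≤ u x) →
      (fderiv ℝ φ p (1, 0)) ^ 2 - (fderiv ℝ φ p (0, 1)) ^ 2 ≤ 1)


/-- `u : ℝ² → ℝ` is locally semiconcave: every point has a convex open neighborhood on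
which `u` is semiconcave with some constant `C ≥ 0` (Euclidean norm, written as a sum
of squares). -/
def LocallySemiconcave (u : ℝ × ℝ → ℝ) : Prop :=
  ∀ p : ℝ × ℝ, ∃ O : Set (ℝ × ℝ), IsOpen O ∧ Convex ℝ O ∧ p ∈ O ∧ ∃ C : ℝ, 0 ≤ C ∧
    ∀ x ∈ O, ∀ y ∈ O, ∀ t ∈ Set.Icc (0:ℝ) 1,
      (1 - t) * u x + t * u y
          - C / 2 * t * (1 - t) * ((x.1 - y.1) ^ 2 + (x.2 - y.2) ^ 2) ≤
        u ((1 - t) • x + t • y)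

/-- If `u : ℝ² → ℝ` is locally semiconcave and, for Lebesgue-almost every `p`, `u` is
differentiable at `p` with `∂u/∂x(p) > 0` and `(∂u/∂x(p))² - (∂u/∂y(p))² = 1`, then
`u` is a viscosity solution of the Lorentzian eikonal equation `g(∇u,∇u) = -1` on the
2-dimensional Minkowski space-time. -/
theorem viscositySolution_of_locallySemiconcave_ae
    (u : ℝ × ℝ → ℝ) (hsc : LocallySemiconcave u)
    (hae : ∀ᵐ p ∂(MeasureTheory.volume : MeasureTheory.Measure (ℝ × ℝ)),
      DifferentiableAt ℝ u p ∧ 0 < fderiv ℝ u p (1, 0) ∧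
        (fderiv ℝ u p (1, 0)) ^ 2 - (fderiv ℝ u p (0, 1)) ^ 2 = 1) :
    IsViscositySolution u Set.univ := by
  obtain ⟨part1, part2⟩ : (∀ p : ℝ × ℝ, ∀ O : Set (ℝ×ℝ), IsOpen O → Convex ℝ O → p ∈ O →
      ∀ C : ℝ, 0 ≤ C →
      (∀ x ∈ O, ∀ y ∈ O, ∀ t ∈ Set.Icc (0:ℝ) 1,
        (1 - t) * u x + t * u y - C / 2 * t * (1 - t) * ((x.1 - y.1) ^ 2 + (x.2 - y.2) ^ 2) ≤
          u ((1 - t) • x + t • y)) →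
      ∀ φ : ℝ × ℝ → ℝ, ∀ U : Set (ℝ × ℝ), IsOpen U → p ∈ U → ContDiffOn ℝ 1 φ U → φ p = u p →
      (∀ x ∈ U, u x ≤ φ x) →
      1 ≤ (fderiv ℝ φ p (1, 0)) ^ 2 - (fderiv ℝ φ p (0, 1)) ^ 2) ∧
      (∀ p : ℝ × ℝ, ∀ O : Set (ℝ×ℝ), IsOpen O → Convex ℝ O → p ∈ O →
      ∀ C : ℝ, 0 ≤ C →
      (∀ x ∈ O, ∀ y ∈ O, ∀ t ∈ Set.Icc (0:ℝ) 1,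
        (1 - t) * u x + t * u y - C / 2 * t * (1 - t) * ((x.1 - y.1) ^ 2 + (x.2 - y.2) ^ 2) ≤
          u ((1 - t) • x + t • y)) →
      ∀ φ : ℝ × ℝ → ℝ, ∀ U : Set (ℝ × ℝ), IsOpen U → p ∈ U → ContDiffOn ℝ 1 φ U → φ p = u p →
      (∀ x ∈ U, φ x ≤ u x) →
      (fderiv ℝ φ p (1, 0)) ^ 2 - (fderiv ℝ φ p (0, 1)) ^ 2 ≤ 1) := by
    constructor
    · intro p O hOo hOc hpO C hC hscO φ U hUo hpU hφ hφp hcomp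
      obtain ⟨r₀, hr₀, hball⟩ : ∃ r > 0, Metric.ball p r ⊆ O ∩ U :=
        Metric.mem_nhds_iff.mp ((hOo.inter hUo).mem_nhds ⟨hpO, hpU⟩)
      have hL : HasFDerivAt φ (fderiv ℝ φ p) p :=
        ((hφ.contDiffAt (hUo.mem_nhds hpU)).differentiableAt one_ne_zero).hasFDerivAt
      set L := fderiv ℝ φ p with hLdef
      set a := L (1,0) with hadef
      set b := L (0,1) with hbdef
      clear_value L
      clear_value a b
      set s := Real.sqrt (1 + b^2) with hsdef
      have hs0 : 0 < s := Real.sqrt_pos.mpr (by positivity)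
      have hs2 : s^2 = 1 + b^2 := Real.sq_sqrt (by positivity)
      have hs1 : 1 ≤ s := by nlinarith [hs2, hs0, sq_nonneg b]
      have hbs : |b| < s := by
        rw [hsdef, ← Real.sqrt_sq_eq_abs]
        exact Real.sqrt_lt_sqrt (sq_nonneg b) (by linarith)
      clear_value s
      have key : ∀ ε : ℝ, 0 < ε → ε ≤ 1 →
          1 ≤ a * s - b * b + ε * (1 + (|a| + |b|) + (s+1) + C*(s+1)^2) := by
        intro ε hε hε1
        obtain ⟨δφ, hδφ0, hφest⟩ := littleo hL hε
        set δ := min (min ε (r₀ / (2*(s+1)))) (δφ / (2*(s+1))) with hδdef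
        have hδ0 : 0 < δ := lt_min (lt_min hε (by positivity)) (by positivity)
        have hδε : δ ≤ ε := le_trans (min_le_left _ _) (min_le_left _ _)
        have hδr : δ * (s+1) ≤ r₀ / 2 := by
          have h1 : δ ≤ r₀ / (2*(s+1)) := le_trans (min_le_left _ _) (min_le_right _ _)
          rw [le_div_iff₀ (by positivity)] at h1
          linarith
        have hδphi : δ * (s+1) ≤ δφ / 2 := by
          have h1 : δ ≤ δφ / (2*(s+1)) := min_le_right _ _
          rw [le_div_iff₀ (by positivity)] at h1
          linarith
        clear_value δ
        set ρ := min (δ*ε^2/(4*s)) (δ*(s - |b|)/2) with hρdef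
        have hρ0 : 0 < ρ := lt_min (by positivity) (by
          have : 0 < s - |b| := by linarith
          positivity)
        have hρ1 : 4*s*ρ ≤ δ*ε^2 := by
          have h1 : ρ ≤ δ*ε^2/(4*s) := min_le_left _ _
          rw [le_div_iff₀ (by positivity)] at h1
          linarith
        have hρ2 : 2 * ρ ≤ δ * (s - |b|) := by
          have h1 : ρ ≤ δ*(s - |b|)/2 := min_le_right _ _
          rw [le_div_iff₀ (by norm_num : (0:ℝ) < 2)] at h1
          linarith
        clear_value ρ
        have hρδ : ρ ≤ δ * ε := by
          have h1 : 4*ρ ≤ 4*s*ρ := by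
            have h0 := mul_le_mul_of_nonneg_right (show (4:ℝ) ≤ 4*s by linarith) hρ0.le
            linarith only [h0]
          have h2 : (δ*ε)*ε ≤ (δ*ε)*1 := mul_le_mul_of_nonneg_left hε1 (mul_nonneg hδ0.le hε.le)
          have h3 : 0 ≤ δ*ε := mul_nonneg hδ0.le hε.le
          linarith only [hρ1, h1, h2, h3]
        have hρδ' : ρ ≤ δ := by
          have h1 : δ*ε ≤ δ*1 := mul_le_mul_of_nonneg_left hε1 hδ0.le
          linarith only [hρδ, h1]
        obtain ⟨q, hqball, hqd, hqpos, hqeik⟩ :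
            ∃ q, q ∈ Metric.ball (p + δ • ((s, -b) : ℝ×ℝ)) ρ ∧
              (DifferentiableAt ℝ u q ∧ 0 < fderiv ℝ u q (1, 0) ∧
                (fderiv ℝ u q (1, 0)) ^ 2 - (fderiv ℝ u q (0, 1)) ^ 2 = 1) := by
          obtain ⟨q, h1, h2⟩ := exists_good _ hae (p + δ • ((s, -b) : ℝ×ℝ)) hρ0
          exact ⟨q, h1, h2⟩
        set w := q - p with hwdef
        have hqz : ‖q - (p + δ • ((s, -b) : ℝ×ℝ))‖ < ρ := by
          rw [← dist_eq_norm]; exact hqball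
        have hc1 : (q - (p + δ • ((s, -b) : ℝ×ℝ))).1 = w.1 - δ * s := by
          simp [hwdef, smul_eq_mul]; ring
        have hc2 : (q - (p + δ • ((s, -b) : ℝ×ℝ))).2 = w.2 + δ * b := by
          simp [hwdef, smul_eq_mul]; ring
        have hw1 : |w.1 - δ * s| ≤ ρ := by
          have h1 := abs_fst_le (q - (p + δ • ((s, -b) : ℝ×ℝ)))
          rw [hc1] at h1; linarith
        have hw2 : |w.2 + δ * b| ≤ ρ := by
          have h1 := abs_snd_le (q - (p + δ • ((s, -b) : ℝ×ℝ)))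
          rw [hc2] at h1; linarith
        have habs1' : |w.1| ≤ δ * s + ρ := by
          have h1 := abs_le.mp hw1
          have h8 : 0 ≤ δ * s := mul_nonneg hδ0.le hs0.le
          rw [abs_le]; constructor
          · linarith [h1.1]
          · linarith [h1.2]
        have habs2' : |w.2| ≤ δ * |b| + ρ := by
          calc |w.2| = |(w.2 + δ * b) - δ * b| := by ring_nf
            _ ≤ |w.2 + δ * b| + |δ * b| := abs_sub _ _
            _ ≤ ρ + δ * |b| := by
                rw [abs_mul, abs_of_pos hδ0]; linarith
            _ = δ * |b| + ρ := by ring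
        have h7 : δ * |b| ≤ δ * s := mul_le_mul_of_nonneg_left hbs.le hδ0.le
        have hnormw : ‖w‖ ≤ δ * (s+1) := norm_pair_le (by linarith) (by linarith)
        have hqmem : q ∈ Metric.ball p r₀ := by
          rw [Metric.mem_ball, dist_eq_norm, ← hwdef]
          calc ‖w‖ ≤ δ * (s+1) := hnormw
            _ ≤ r₀ / 2 := hδr
            _ < r₀ := by linarith
        have hqU : q ∈ U := (hball hqmem).2
        -- supergradient inequality at q evaluated at p
        have hsg := supergrad hC hscO (hball hqmem).1 hqd hpO
        set N1 := fderiv ℝ u q (1,0) with hN1def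
        set N2 := fderiv ℝ u q (0,1) with hN2def
        have hNpq : fderiv ℝ u q (p - q) = -(N1 * w.1 + N2 * w.2) := by
          rw [clm_eval]
          have e1 : (p - q).1 = -w.1 := by simp [hwdef]
          have e2 : (p - q).2 = -w.2 := by simp [hwdef]
          rw [e1, e2, ← hN1def, ← hN2def]; ring
        have hEpq : (p.1-q.1)^2 + (p.2-q.2)^2 = w.1^2 + w.2^2 := by
          have e1 : p.1 - q.1 = -w.1 := by simp [hwdef]
          have e2 : p.2 - q.2 = -w.2 := by simp [hwdef]
          rw [e1, e2]; ring
        rw [hNpq, hEpq] at hsg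
        clear_value N1 N2
        -- comparison with φ
        have hup : u q ≤ φ q := hcomp q hqU
        have hφq : φ q - φ p - L w ≤ ε * ‖w‖ := by
          have h1 := hφest q (by
            rw [← hwdef]
            calc ‖w‖ ≤ δ * (s+1) := hnormw
              _ ≤ δφ / 2 := hδphi
              _ < δφ := by linarith)
          rw [← hwdef] at h1
          linarith [(abs_le.mp h1).2]
        -- reverse Cauchy-Schwarz lower bound
        have hwcmp : |w.2| ≤ w.1 := by
          have h1 := abs_le.mp hw1
          linarith [habs2', h1.1, hρ2]
        have hrcs : Real.sqrt (w.1^2 - w.2^2) ≤ N1 * w.1 + N2 * w.2 := rcs hqeik hqpos hwcmp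
        have hw1pos : 0 ≤ δ * s - ρ := by
          have h8 : 0 ≤ δ * |b| := mul_nonneg hδ0.le (abs_nonneg b)
          linarith only [hρ2, hρ0.le, h8]
        have hw1lb : δ * s - ρ ≤ w.1 := by linarith [(abs_le.mp hw1).1]
        have hsqlb : (δ * (1 - ε))^2 ≤ w.1^2 - w.2^2 := by
          have hw1sq : (δ*s - ρ)^2 ≤ w.1^2 := by
            have := pow_le_pow_left₀ hw1pos hw1lb 2
            linarith only [this]
          have hw2sq : w.2^2 ≤ (δ*|b| + ρ)^2 := by
            have := pow_le_pow_left₀ (abs_nonneg w.2) habs2' 2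
            rw [sq_abs] at this
            linarith only [this]
          have h0 := aux1 (β := |b|) (by rw [sq_abs]; exact hs2) (abs_nonneg b) hbs.le hs1 hρ1 hρ0.le hδ0 hε hε1
          linarith only [h0, hw1sq, hw2sq]
        have hsqrt : δ * (1 - ε) ≤ Real.sqrt (w.1^2 - w.2^2) := by
          have h0 : 0 ≤ δ * (1 - ε) := mul_nonneg hδ0.le (by linarith)
          calc δ * (1-ε) = Real.sqrt ((δ * (1-ε))^2) := (Real.sqrt_sq h0).symm
            _ ≤ Real.sqrt (w.1^2 - w.2^2) := Real.sqrt_le_sqrt hsqlb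
        -- bound L w
        have hLw : L w = w.1 * a + w.2 * b := by rw [clm_eval, ← hadef, ← hbdef]
        have hLwb : L w ≤ δ * (s * a - b * b) + ρ * (|a| + |b|) := by
          have h2 : (w.1 - δ*s)*a ≤ ρ*|a| := by
            calc (w.1-δ*s)*a ≤ |(w.1-δ*s)*a| := le_abs_self _
              _ = |w.1 - δ*s| * |a| := abs_mul _ _
              _ ≤ ρ*|a| := mul_le_mul_of_nonneg_right hw1 (abs_nonneg a)
          have h3 : (w.2 + δ*b)*b ≤ ρ*|b| := by
            calc (w.2+δ*b)*b ≤ |(w.2+δ*b)*b| := le_abs_self _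
              _ = |w.2 + δ*b| * |b| := abs_mul _ _
              _ ≤ ρ*|b| := mul_le_mul_of_nonneg_right hw2 (abs_nonneg b)
          have h4 : L w = δ*(s*a - b*b) + (w.1 - δ*s)*a + (w.2 + δ*b)*b := by rw [hLw]; ring
          linarith only [h2, h3, h4]
        have hEw : w.1^2 + w.2^2 ≤ 2 * (δ*(s+1))^2 := by
          have e1 : w.1^2 ≤ (δ*(s+1))^2 := by
            have := pow_le_pow_left₀ (abs_nonneg w.1) (show |w.1| ≤ δ*(s+1) by linarith) 2
            rw [sq_abs] at this; linarith only [this]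
          have e2 : w.2^2 ≤ (δ*(s+1))^2 := by
            have := pow_le_pow_left₀ (abs_nonneg w.2) (show |w.2| ≤ δ*(s+1) by linarith) 2
            rw [sq_abs] at this; linarith only [this]
          linarith only [e1, e2]
        -- main chain
        have hchain : δ * (1 - ε) ≤ δ * (s*a - b*b) + ρ*(|a|+|b|) + ε*(δ*(s+1)) + C * (δ*(s+1))^2 := by
          have c1 : δ * (1-ε) ≤ N1 * w.1 + N2 * w.2 := le_trans hsqrt hrcs
          have c2 : N1 * w.1 + N2 * w.2 ≤ u q - u p + C/2 * (w.1^2 + w.2^2) := by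
            linarith only [hsg]
          have c3 : u q - u p ≤ L w + ε * ‖w‖ := by
            linarith only [hφq, hup, hφp.le, hφp.ge]
          have c4 : ε * ‖w‖ ≤ ε * (δ*(s+1)) := mul_le_mul_of_nonneg_left hnormw hε.le
          have c5 : C/2 * (w.1^2 + w.2^2) ≤ C * (δ*(s+1))^2 := by
            have := mul_le_mul_of_nonneg_left hEw (by linarith : (0:ℝ) ≤ C/2)
            linarith only [this]
          linarith only [c1, c2, c3, c4, c5, hLwb]
        -- divide by δ
        have hdiv : 1 - ε ≤ (s*a - b*b) + ε*(|a|+|b|) + ε*(s+1) + C*ε*(s+1)^2 := by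
          have hρab : ρ*(|a|+|b|) ≤ δ*(ε*(|a|+|b|)) := by
            have := mul_le_mul_of_nonneg_right hρδ (by positivity : (0:ℝ) ≤ |a|+|b|)
            linarith only [this]
          have hCd : C * (δ*(s+1))^2 ≤ δ * (C*ε*(s+1)^2) := by
            have h1 : δ*δ ≤ δ*ε := mul_le_mul_of_nonneg_left hδε hδ0.le
            have h2 := mul_le_mul_of_nonneg_left h1 (by positivity : (0:ℝ) ≤ C*(s+1)^2)
            linarith only [h2]
          have h10 : δ * (1-ε) ≤ δ * ((s*a - b*b) + ε*(|a|+|b|) + ε*(s+1) + C*ε*(s+1)^2) := by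
            linarith only [hchain, hρab, hCd]
          exact le_of_mul_le_mul_left (by linarith only [h10]) hδ0
        linarith only [hdiv]
      -- conclude
      obtain ⟨M, hM⟩ : ∃ M : ℝ, 1 + (|a| + |b|) + (s+1) + C*(s+1)^2 = M := ⟨_, rfl⟩
      have hM0 : 0 < M := by rw [← hM]; positivity
      have hfin : 1 ≤ a * s - b * b := by
        refine le_of_forall_pos_le_add fun ε' hε' => ?_
        have h1 := key (min 1 (ε'/M)) (lt_min one_pos (by positivity)) (min_le_left _ _)
        rw [hM] at h1
        have h2 : (min 1 (ε'/M)) * M ≤ ε' := by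
          calc (min 1 (ε'/M)) * M ≤ (ε'/M) * M := mul_le_mul_of_nonneg_right (min_le_right _ _) hM0.le
            _ = ε' := by field_simp
        linarith
      exact aux3 hs1 (aux2 hfin hs2 hs0) hs2
    · intro p O hOo hOc hpO C hC hscO φ U hUo hpU hφ hφp hcomp
      obtain ⟨r₀, hr₀, hball⟩ : ∃ r > 0, Metric.ball p r ⊆ O ∩ U :=
        Metric.mem_nhds_iff.mp ((hOo.inter hUo).mem_nhds ⟨hpO, hpU⟩)
      have hL : HasFDerivAt φ (fderiv ℝ φ p) p :=
        ((hφ.contDiffAt (hUo.mem_nhds hpU)).differentiableAt one_ne_zero).hasFDerivAt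
      set L := fderiv ℝ φ p with hLdef
      set a := L (1,0) with hadef
      set b := L (0,1) with hbdef
      clear_value L
      clear_value a b
      -- two-sided first order expansion of u at p
      have uest : ∀ ε : ℝ, 0 < ε → ∃ δu > 0, δu ≤ r₀ ∧ ∀ x : ℝ×ℝ, ‖x - p‖ < δu →
          |u x - u p - L (x - p)| ≤ ε * ‖x - p‖ + 2*C*‖x - p‖^2 := by
        intro ε hε
        obtain ⟨δφ, hδφ0, hφest⟩ := littleo hL hε
        refine ⟨min δφ r₀, lt_min hδφ0 hr₀, min_le_right _ _, ?_⟩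
        intro x hx
        have hxφ : ‖x - p‖ < δφ := lt_of_lt_of_le hx (min_le_left _ _)
        have hxr : ‖x - p‖ < r₀ := lt_of_lt_of_le hx (min_le_right _ _)
        have hxmem : x ∈ Metric.ball p r₀ := by rw [Metric.mem_ball, dist_eq_norm]; exact hxr
        have hxU : x ∈ U := (hball hxmem).2
        have hxO : x ∈ O := (hball hxmem).1
        set y : ℝ×ℝ := p + (p - x) with hydef
        have hyp : y - p = p - x := by rw [hydef]; abel
        have hypnorm : ‖y - p‖ = ‖x - p‖ := by rw [hyp, norm_sub_rev]
        have hymem : y ∈ Metric.ball p r₀ := by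
          rw [Metric.mem_ball, dist_eq_norm, hypnorm]; exact hxr
        have hyU : y ∈ U := (hball hymem).2
        have hyO : y ∈ O := (hball hymem).1
        -- E bound
        have hE1 : (x.1 - p.1)^2 ≤ ‖x - p‖^2 := by
          have h1 : |(x - p).1| ≤ ‖x - p‖ := abs_fst_le _
          have h2 : (x - p).1 = x.1 - p.1 := by simp
          rw [h2] at h1
          have := pow_le_pow_left₀ (abs_nonneg _) h1 2
          rw [sq_abs] at this; linarith only [this]
        have hE2 : (x.2 - p.2)^2 ≤ ‖x - p‖^2 := by
          have h1 : |(x - p).2| ≤ ‖x - p‖ := abs_snd_le _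
          have h2 : (x - p).2 = x.2 - p.2 := by simp
          rw [h2] at h1
          have := pow_le_pow_left₀ (abs_nonneg _) h1 2
          rw [sq_abs] at this; linarith only [this]
        -- lower bound
        have hlo : -(ε * ‖x - p‖ + 2*C*‖x - p‖^2) ≤ u x - u p - L (x - p) := by
          have h1 := hφest x hxφ
          have h2 := hcomp x hxU
          have h3 := (abs_le.mp h1).1
          have h4 : 0 ≤ 2*C*‖x - p‖^2 := by positivity
          linarith only [h2, h3, hφp.le, hφp.ge, h4]
        -- upper bound via semiconcavity
        have hhi : u x - u p - L (x - p) ≤ ε * ‖x - p‖ + 2*C*‖x - p‖^2 := by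
          have key := hscO x hxO y hyO (1/2) ⟨by norm_num, by norm_num⟩
          have hmid : (1 - (1/2:ℝ)) • x + (1/2:ℝ) • y = p := by rw [hydef]; module
          rw [hmid] at key
          have hEy : (x.1 - y.1)^2 + (x.2 - y.2)^2 = 4*((x.1-p.1)^2 + (x.2-p.2)^2) := by
            have e1 : y.1 = p.1 + (p.1 - x.1) := by rw [hydef]; simp
            have e2 : y.2 = p.2 + (p.2 - x.2) := by rw [hydef]; simp
            rw [e1, e2]; ring
          rw [hEy] at key
          -- key : 1/2 u x + 1/2 u y - C/2 * (1/2) * (1/2) * 4E ≤ u p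
          have hφy := hφest y (by rw [hypnorm]; exact hxφ)
          have hLy : L (y - p) = -(L (x - p)) := by
            rw [hyp, show p - x = -(x - p) from by abel, map_neg]
          rw [hLy] at hφy
          have h4 := (abs_le.mp hφy).1
          have h5 := hcomp y hyU
          rw [hypnorm] at h4
          -- u y ≥ u p - L(x-p) - ε‖x-p‖
          have hCE : C * ((x.1-p.1)^2 + (x.2-p.2)^2) ≤ C * (2*‖x-p‖^2) :=
            mul_le_mul_of_nonneg_left (by linarith only [hE1, hE2]) hC
          linarith only [key, h4, h5, hφp.le, hφp.ge, hCE]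
        exact abs_le.mpr ⟨hlo, hhi⟩
      -- constant K
      obtain ⟨K, hKdef⟩ : ∃ K : ℝ, 3 + 11*C = K := ⟨_, rfl⟩
      have hK0 : 0 < K := by rw [← hKdef]; positivity
      -- approximate gradients
      have key2 : ∀ ε : ℝ, 0 < ε → ε ≤ 1 → ∃ N1 N2 : ℝ,
          N1^2 - N2^2 = 1 ∧ |N1 - a| ≤ K*ε ∧ |N2 - b| ≤ K*ε := by
        intro ε hε hε1
        obtain ⟨δu, hδu0, hδur, hu⟩ := uest ε hε
        set δ := min ε (δu/4) with hδdef
        have hδ0 : 0 < δ := lt_min hε (by positivity)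
        have hδε : δ ≤ ε := min_le_left _ _
        have hδu4 : δ ≤ δu/4 := min_le_right _ _
        clear_value δ
        obtain ⟨q, hqball, hqd, hqpos, hqeik⟩ :
            ∃ q, q ∈ Metric.ball p δ ∧
              (DifferentiableAt ℝ u q ∧ 0 < fderiv ℝ u q (1, 0) ∧
                (fderiv ℝ u q (1, 0)) ^ 2 - (fderiv ℝ u q (0, 1)) ^ 2 = 1) := by
          obtain ⟨q, h1, h2⟩ := exists_good _ hae p hδ0
          exact ⟨q, h1, h2⟩
        have hqp : ‖q - p‖ < δ := by rw [← dist_eq_norm]; exact hqball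
        have hqmem : q ∈ Metric.ball p r₀ := by
          rw [Metric.mem_ball, dist_eq_norm]
          calc ‖q - p‖ < δ := hqp
            _ ≤ δu/4 := hδu4
            _ ≤ r₀ := by linarith
        have hqO : q ∈ O := (hball hqmem).1
        -- the main directional estimate
        have claim : ∀ d : ℝ×ℝ, ‖d‖ ≤ 1 → L d - (3+11*C)*ε ≤ fderiv ℝ u q d := by
          intro d hd
          set x := q + δ • d with hxdef
          have hxq : x - q = δ • d := by rw [hxdef]; abel
          have hxq1 : (x - q).1 = δ * d.1 := by rw [hxq]; simp
          have hxq2 : (x - q).2 = δ * d.2 := by rw [hxq]; simp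
          have hNx : fderiv ℝ u q (x - q) = δ * fderiv ℝ u q d := by
            rw [hxq, _root_.map_smul, smul_eq_mul]
          have hd1 : d.1^2 ≤ 1 := by
            have h1 := le_trans (abs_fst_le d) hd
            have := pow_le_pow_left₀ (abs_nonneg _) h1 2
            rw [sq_abs, one_pow] at this; linarith only [this]
          have hd2 : d.2^2 ≤ 1 := by
            have h1 := le_trans (abs_snd_le d) hd
            have := pow_le_pow_left₀ (abs_nonneg _) h1 2
            rw [sq_abs, one_pow] at this; linarith only [this]
          have hExq : (x.1-q.1)^2 + (x.2-q.2)^2 ≤ 2*δ^2 := by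
            have e1 : x.1 - q.1 = δ * d.1 := hxq1
            have e2 : x.2 - q.2 = δ * d.2 := hxq2
            rw [e1, e2]
            have t1 : (δ*d.1)^2 = δ^2 * d.1^2 := by ring
            have t2 : (δ*d.2)^2 = δ^2 * d.2^2 := by ring
            rw [t1, t2]
            have s1 : δ^2 * d.1^2 ≤ δ^2 * 1 := mul_le_mul_of_nonneg_left hd1 (sq_nonneg δ)
            have s2 : δ^2 * d.2^2 ≤ δ^2 * 1 := mul_le_mul_of_nonneg_left hd2 (sq_nonneg δ)
            linarith only [s1, s2]
          have hxp : ‖x - p‖ ≤ 2*δ := by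
            have h1 : x - p = (q - p) + δ • d := by rw [hxdef]; abel
            rw [h1]
            calc ‖(q - p) + δ • d‖ ≤ ‖q - p‖ + ‖δ • d‖ := norm_add_le _ _
              _ ≤ δ + δ := by
                  have h2 : ‖δ • d‖ = |δ| * ‖d‖ := by rw [norm_smul, Real.norm_eq_abs]
                  have h3 : |δ| * ‖d‖ ≤ δ * 1 := by
                    rw [abs_of_pos hδ0]
                    exact mul_le_mul_of_nonneg_left hd hδ0.le
                  rw [h2]; linarith only [hqp.le, h3]
              _ = 2*δ := by ring
          have hxmem : x ∈ Metric.ball p r₀ := by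
            rw [Metric.mem_ball, dist_eq_norm]
            calc ‖x - p‖ ≤ 2*δ := hxp
              _ ≤ δu/2 := by linarith
              _ < r₀ := by linarith
          have hxO : x ∈ O := (hball hxmem).1
          have hsg := supergrad hC hscO hqO hqd hxO
          rw [hNx] at hsg
          -- expansions
          have hA := hu x (by
            calc ‖x - p‖ ≤ 2*δ := hxp
              _ ≤ δu/2 := by linarith
              _ < δu := by linarith)
          have hB := hu q (by
            calc ‖q - p‖ < δ := hqp
              _ ≤ δu := by linarith)
          have hLx : L (x - p) = L (q - p) + δ * L d := by
            have h1 : x - p = (q - p) + δ • d := by rw [hxdef]; abel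
            rw [h1, map_add, _root_.map_smul, smul_eq_mul]
          have hA1 := (abs_le.mp hA).1
          have hB1 := (abs_le.mp hB).2
          rw [hLx] at hA1
          -- norm square bounds
          have hxp2 : ‖x - p‖^2 ≤ 4*δ^2 := by
            have := pow_le_pow_left₀ (norm_nonneg (x-p)) hxp 2
            linarith only [this]
          have hqp2 : ‖q - p‖^2 ≤ δ^2 := by
            have := pow_le_pow_left₀ (norm_nonneg (q-p)) hqp.le 2
            linarith only [this]
          have hεx : ε * ‖x - p‖ ≤ 2*ε*δ := by
            have := mul_le_mul_of_nonneg_left hxp hε.le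
            linarith only [this]
          have hεq : ε * ‖q - p‖ ≤ ε*δ := by
            have := mul_le_mul_of_nonneg_left hqp.le hε.le
            linarith only [this]
          have hCx : 2*C*‖x - p‖^2 ≤ 8*C*δ^2 := by
            have := mul_le_mul_of_nonneg_left hxp2 (by linarith : (0:ℝ) ≤ 2*C)
            linarith only [this]
          have hCq : 2*C*‖q - p‖^2 ≤ 2*C*δ^2 := by
            have := mul_le_mul_of_nonneg_left hqp2 (by linarith : (0:ℝ) ≤ 2*C)
            linarith only [this]
          have hCE : C/2 * ((x.1-q.1)^2 + (x.2-q.2)^2) ≤ C*δ^2 := by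
            have := mul_le_mul_of_nonneg_left hExq (by linarith : (0:ℝ) ≤ C/2)
            linarith only [this]
          have hcomb : δ * (L d - (3+11*C)*ε) ≤ δ * fderiv ℝ u q d := by
            have hδ2 : δ*δ ≤ δ*ε := mul_le_mul_of_nonneg_left hδε hδ0.le
            have hCδ2 : 11*C*(δ*δ) ≤ 11*C*(δ*ε) :=
              mul_le_mul_of_nonneg_left hδ2 (by linarith : (0:ℝ) ≤ 11*C)
            linarith only [hsg, hA1, hB1, hεx, hεq, hCx, hCq, hCE, hCδ2]
          exact le_of_mul_le_mul_left hcomb hδ0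
        -- apply in the four directions
        have hone : ‖((1:ℝ),(0:ℝ))‖ ≤ 1 := norm_pair_le (by norm_num) (by norm_num)
        have hmone : ‖((-1:ℝ),(0:ℝ))‖ ≤ 1 := norm_pair_le (by norm_num) (by norm_num)
        have htwo : ‖((0:ℝ),(1:ℝ))‖ ≤ 1 := norm_pair_le (by norm_num) (by norm_num)
        have hmtwo : ‖((0:ℝ),(-1:ℝ))‖ ≤ 1 := norm_pair_le (by norm_num) (by norm_num)
        have hneg1 : ((-1:ℝ),(0:ℝ)) = -((1:ℝ),(0:ℝ)) := by norm_num
        have hneg2 : ((0:ℝ),(-1:ℝ)) = -((0:ℝ),(1:ℝ)) := by norm_num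
        have c1 := claim _ hone
        have c2 := claim _ hmone
        have c3 := claim _ htwo
        have c4 := claim _ hmtwo
        rw [hneg1, map_neg, map_neg] at c2
        rw [hneg2, map_neg, map_neg] at c4
        rw [← hadef] at c1 c2
        rw [← hbdef] at c3 c4
        refine ⟨fderiv ℝ u q (1,0), fderiv ℝ u q (0,1), hqeik, ?_, ?_⟩
        · rw [← hKdef, abs_le]; constructor <;> linarith only [c1, c2]
        · rw [← hKdef, abs_le]; constructor <;> linarith only [c3, c4]
      -- conclude
      obtain ⟨M, hMdef⟩ : ∃ M : ℝ, K*(2*|a| + 2*|b| + 2*K) + 1 = M := ⟨_, rfl⟩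
      have hM0 : 0 < M := by rw [← hMdef]; positivity
      have hM1 : K*(2*|a| + 2*|b| + 2*K) ≤ M := by rw [← hMdef]; linarith
      show a^2 - b^2 ≤ 1
      refine le_of_forall_pos_le_add fun ε' hε' => ?_
      set ε := min 1 (ε'/M) with hεdef
      have hε0 : 0 < ε := lt_min one_pos (by positivity)
      have hε1 : ε ≤ 1 := min_le_left _ _
      have hεM : ε ≤ ε'/M := min_le_right _ _
      obtain ⟨N1, N2, hN, h1, h2⟩ := key2 ε hε0 hε1
      have hc0 : 0 ≤ K*ε := by positivity
      have hcK : K*ε ≤ K := by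
        have := mul_le_mul_of_nonneg_left hε1 hK0.le
        linarith only [this]
      have d1 : a^2 - N1^2 ≤ (K*ε)*(|a| + |N1|) := sq_diff_le (by rwa [abs_sub_comm] at h1)
      have d2 : N2^2 - b^2 ≤ (K*ε)*(|N2| + |b|) := sq_diff_le h2
      have hN1abs : |N1| ≤ |a| + K*ε := by
        have := abs_sub_abs_le_abs_sub N1 a
        linarith only [this, h1]
      have hN2abs : |N2| ≤ |b| + K*ε := by
        have := abs_sub_abs_le_abs_sub N2 b
        linarith only [this, h2]
      have t1 : (K*ε)*(|a| + |N1|) ≤ (K*ε)*(2*|a| + K) :=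
        mul_le_mul_of_nonneg_left (by linarith only [hN1abs, hcK]) hc0
      have t2 : (K*ε)*(|N2| + |b|) ≤ (K*ε)*(2*|b| + K) :=
        mul_le_mul_of_nonneg_left (by linarith only [hN2abs, hcK]) hc0
      have t3 : (K*ε)*(2*|a| + K) + (K*ε)*(2*|b| + K) = ε * (K*(2*|a| + 2*|b| + 2*K)) := by ring
      have t4 : ε * (K*(2*|a| + 2*|b| + 2*K)) ≤ ε * M :=
        mul_le_mul_of_nonneg_left hM1 hε0.le
      have t5 : ε * M ≤ ε' := by
        have h6 : ε * M ≤ (ε'/M) * M := mul_le_mul_of_nonneg_right hεM hM0.le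
        have h7 : (ε'/M) * M = ε' := by field_simp
        linarith only [h6, h7]
      linarith only [d1, d2, hN, t1, t2, t3, t4, t5]
  constructor
  · intro p _ φ U hUo hpU _ hφ hφp hcomp
    obtain ⟨O, hOo, hOc, hpO, C, hC, hscO⟩ := hsc p
    exact part1 p O hOo hOc hpO C hC hscO φ U hUo hpU hφ hφp hcomp
  · intro p _ φ U hUo hpU _ hφ hφp hcomp
    obtain ⟨O, hOo, hOc, hpO, C, hC, hscO⟩ := hsc p
    exact part2 p O hOo hOc hpO C hC hscO φ U hUo hpU hφ hφp hcomp
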